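/- The kinetic dissipation operator does not have a unique invariant state: (i) with N = Σ_k n_k, D_kin commutes with the number dynamics, i.e. exp(itN) D_kin(A) exp(−itN) = D_kin( exp(itN) A exp(−itN) ) for all A ∈ M and t ∈ ℝ; (ii) for every μ′ ∈ ℝ, the Gibbs state ρ_{μ′}(A) = Tr(exp(−βF_{μ′}) A)/Tr(exp(−βF_{μ′})), where F_{μ′} = Σ_k (ε_k − μ′) n_k, satisfies ρ_{μ′}(D_kin(A)) = 0 for all A ∈ M; (iii) if the map μ′ ↦ 1/(1+e^{β(ε_0−μ′)}) is non-constant (which holds since β > 0), distinct values of μ′ give distinct D_kin-invariant states. -/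

import Mathlib

open Matrix

noncomputable section JW

/-- The operator algebra of `n` fermionic sites: `2^n × 2^n` complex matrices, with the
index set realized as `Fin n → Fin 2` (the tensor-product basis). -/
abbrev FermionAlg (n : ℕ) := Matrix (Fin n → Fin 2) (Fin n → Fin 2) ℂ

/-- Jordan–Wigner annihilation operator at site `k`:
`a_k = σ₃^{⊗ k} ⊗ σ⁻ ⊗ 1₂^{⊗ (n−k−1)}`, with `σ⁻ = [[0,0],[1,0]]` and
`σ₃ = [[1,0],[0,−1]]`, written entrywise in the tensor-product basis
(the entry of a tensor product at `(v, w)` is the product of the entries of the factors). -/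
def jwA (n : ℕ) (k : Fin n) : FermionAlg n :=
  Matrix.of fun v w => ∏ j : Fin n,
    if j < k then (if v j = w j then (-1 : ℂ) ^ (v j : ℕ) else 0)
    else if j = k then (if v j = 1 ∧ w j = 0 then 1 else 0)
    else (if v j = w j then 1 else 0)

/-- The number operator `n_k = a_kᴴ a_k`. -/
def numOp (n : ℕ) (k : Fin n) : FermionAlg n := (jwA n k)ᴴ * jwA n k

/-- The grading unitary `G = ∏_k (1 − 2 n_k)`. -/
def grading (n : ℕ) : FermionAlg n :=
  (List.ofFn fun k : Fin n => (1 - 2 • numOp n k)).prod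

/-- The free energy `F = Σ_k (ε_k − μ) n_k`. -/
def freeEnergy (n : ℕ) (ε : Fin n → ℝ) (μ : ℝ) : FermionAlg n :=
  ∑ k, ((ε k - μ : ℝ) : ℂ) • numOp n k

/-- The Gibbs state `ρ(A) = Tr(exp(−βF)·A)/Tr(exp(−βF))`. -/
def gibbs (n : ℕ) (ε : Fin n → ℝ) (μ β : ℝ) (A : FermionAlg n) : ℂ :=
  ((NormedSpace.exp ((-(β : ℂ)) • freeEnergy n ε μ)) * A).trace /
    (NormedSpace.exp ((-(β : ℂ)) • freeEnergy n ε μ)).trace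

end JW

noncomputable section

/-- Mott's jump rate `Γ_{x→y} = Γ₀ (e^{−|x−y|/r}/Z) e^{−β(ε_y−ε_x)⁺}`. -/
def jumpRate (n : ℕ) (Γ₀ r Z β : ℝ) (ε : Fin n → ℝ) (x y : Fin n) : ℝ :=
  Γ₀ * (Real.exp (-(((|(x : ℤ) - (y : ℤ)| : ℤ) : ℝ)) / r) / Z) *
    Real.exp (-(β * max (ε y - ε x) 0))

/-- The kinetic jump operator `L_{x→y} = √Γ_{x→y} · a_yᴴ a_x`. -/
def jumpOp (n : ℕ) (Γ₀ r Z β : ℝ) (ε : Fin n → ℝ) (x y : Fin n) : FermionAlg n :=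
  ((Real.sqrt (jumpRate n Γ₀ r Z β ε x y) : ℝ) : ℂ) • ((jwA n y)ᴴ * jwA n x)

/-- The kinetic dissipation operator
`D_kin(A) = Σ_{x≠y} ( ½(L_{x→y}ᴴ L_{x→y} A + A L_{x→y}ᴴ L_{x→y}) − L_{x→y}ᴴ A L_{x→y} )`. -/
def Dkin (n : ℕ) (Γ₀ r Z β : ℝ) (ε : Fin n → ℝ) (A : FermionAlg n) : FermionAlg n :=
  ∑ x : Fin n, ∑ y : Fin n,
    if x = y then 0 else
      ((1 / 2 : ℂ) • ((jumpOp n Γ₀ r Z β ε x y)ᴴ * jumpOp n Γ₀ r Z β ε x y * A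
          + A * ((jumpOp n Γ₀ r Z β ε x y)ᴴ * jumpOp n Γ₀ r Z β ε x y))
        - (jumpOp n Γ₀ r Z β ε x y)ᴴ * A * jumpOp n Γ₀ r Z β ε x y)



section AuxJW
open Finset
variable {n : ℕ}

def numC (k : Fin n) (v w : Fin n → Fin 2) : Prop :=
  v k = 1 ∧ w k = 0 ∧ ∀ j, j ≠ k → v j = w j

lemma jwA_apply' (k : Fin n) (v w : Fin n → Fin 2) :
    jwA n k v w = ∏ j : Fin n,
      if j < k then (if v j = w j then (-1 : ℂ) ^ (v j : ℕ) else 0)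
      else if j = k then (if v j = 1 ∧ w j = 0 then 1 else 0)
      else (if v j = w j then 1 else 0) := rfl

lemma jwA_eq_zero {k : Fin n} {v w : Fin n → Fin 2} (h : ¬ numC k v w) :
    jwA n k v w = 0 := by
  rw [jwA_apply']
  unfold numC at h
  push_neg at h
  by_cases h1 : v k = 1 ∧ w k = 0
  · obtain ⟨j, hj, hvw⟩ := h h1.1 h1.2
    refine Finset.prod_eq_zero (Finset.mem_univ j) ?_
    rcases lt_trichotomy j k with hlt | heq | hgt
    · simp [hlt, hvw]
    · exact absurd heq hj
    · simp [not_lt_of_gt hgt, (Fin.ne_of_gt hgt), hvw]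
  · refine Finset.prod_eq_zero (Finset.mem_univ k) ?_
    simp [h1]

lemma jwA_star_mul {k : Fin n} {v w : Fin n → Fin 2} (h : numC k v w) :
    star (jwA n k v w) * jwA n k v w = 1 := by
  obtain ⟨h1, h2, h3⟩ := h
  rw [jwA_apply', star_prod, ← Finset.prod_mul_distrib]
  refine Finset.prod_eq_one fun j _ => ?_
  rcases lt_trichotomy j k with hlt | heq | hgt
  · have hvw : v j = w j := h3 j (Fin.ne_of_lt hlt)
    simp only [hlt, if_true, hvw, if_pos rfl]
    rw [star_pow, star_neg, star_one, ← mul_pow]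
    norm_num
  · subst heq
    simp [h1, h2]
  · have hvw : v j = w j := h3 j (Fin.ne_of_gt hgt)
    simp [not_lt_of_gt hgt, Fin.ne_of_gt hgt, hvw]

lemma numC_fst {k : Fin n} {v w : Fin n → Fin 2} (h : numC k v w) :
    v = Function.update w k 1 := by
  funext j
  by_cases hj : j = k
  · subst hj; simp [Function.update_self, h.1]
  · simp [Function.update_of_ne hj, h.2.2 j hj]

lemma numOp_eq_diagonal (k : Fin n) :
    numOp n k = diagonal (fun w => if w k = 0 then (1 : ℂ) else 0) := by
  ext w w'
  rw [numOp, Matrix.mul_apply]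
  simp only [conjTranspose_apply, diagonal_apply]
  by_cases hww : w = w'
  · subst hww
    by_cases hw : w k = 0
    · rw [if_pos rfl, if_pos hw]
      rw [Finset.sum_eq_single (Function.update w k 1)]
      · exact jwA_star_mul ⟨Function.update_self .., hw, fun j hj => Function.update_of_ne hj ..⟩
      · intro v _ hv
        rw [jwA_eq_zero (fun h => hv (numC_fst h)), star_zero, zero_mul]
      · simp
    · rw [if_pos rfl, if_neg hw]
      refine Finset.sum_eq_zero fun v _ => ?_
      rw [jwA_eq_zero (fun h => hw h.2.1), star_zero, zero_mul]
  · rw [if_neg hww]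
    refine Finset.sum_eq_zero fun v _ => ?_
    by_cases h1 : numC k v w
    · by_cases h2 : numC k v w'
      · exfalso; apply hww
        funext j
        by_cases hj : j = k
        · subst hj; rw [h1.2.1, h2.2.1]
        · rw [← h1.2.2 j hj, h2.2.2 j hj]
      · rw [jwA_eq_zero h2, mul_zero]
    · rw [jwA_eq_zero h1, star_zero, zero_mul]

/-- hop condition for `(jwA y)ᴴ * jwA x`: row w, column w'. -/
def hopC (x y : Fin n) (w w' : Fin n → Fin 2) : Prop :=
  w x = 1 ∧ w y = 0 ∧ w' x = 0 ∧ w' y = 1 ∧ ∀ j, j ≠ x → j ≠ y → w j = w' j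

def hopM (n : ℕ) (x y : Fin n) : FermionAlg n := (jwA n y)ᴴ * jwA n x

lemma hopC_of_numC {x y : Fin n} (hxy : x ≠ y) {v w w' : Fin n → Fin 2}
    (h1 : numC y v w) (h2 : numC x v w') : hopC x y w w' := by
  refine ⟨?_, h1.2.1, h2.2.1, ?_, ?_⟩
  · rw [← h1.2.2 x hxy]; exact h2.1
  · rw [← h2.2.2 y (Ne.symm hxy)]; exact h1.1
  · intro j hjx hjy
    rw [← h1.2.2 j hjy, h2.2.2 j hjx]

lemma hopM_eq_zero {x y : Fin n} (hxy : x ≠ y) {w w' : Fin n → Fin 2}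
    (h : ¬ hopC x y w w') : hopM n x y w w' = 0 := by
  rw [hopM, Matrix.mul_apply]
  refine Finset.sum_eq_zero fun v _ => ?_
  simp only [conjTranspose_apply]
  by_cases h1 : numC y v w
  · by_cases h2 : numC x v w'
    · exact absurd (hopC_of_numC hxy h1 h2) h
    · rw [jwA_eq_zero h2, mul_zero]
  · rw [jwA_eq_zero h1, star_zero, zero_mul]

lemma hopM_star_mul {x y : Fin n} (hxy : x ≠ y) {w w' : Fin n → Fin 2}
    (h : hopC x y w w') : star (hopM n x y w w') * hopM n x y w w' = 1 := by
  obtain ⟨hwx, hwy, hw'x, hw'y, hoff⟩ := h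
  have hM : hopM n x y w w' =
      star (jwA n y (Function.update w y 1) w) * jwA n x (Function.update w y 1) w' := by
    rw [hopM, Matrix.mul_apply]
    rw [Finset.sum_eq_single (Function.update w y 1)]
    · rfl
    · intro v _ hv
      rw [conjTranspose_apply, jwA_eq_zero (fun hc => hv (numC_fst hc)), star_zero, zero_mul]
    · simp
  have hnum1 : numC y (Function.update w y 1) w :=
    ⟨Function.update_self .., hwy, fun j hj => Function.update_of_ne hj ..⟩
  have hnum2 : numC x (Function.update w y 1) w' := by
    refine ⟨?_, hw'x, ?_⟩
    · rw [Function.update_of_ne hxy]; exact hwx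
    · intro j hj
      by_cases hjy : j = y
      · subst hjy; rw [Function.update_self, hw'y]
      · rw [Function.update_of_ne hjy]; exact hoff j hj hjy
  rw [hM]
  set a := jwA n y (Function.update w y 1) w
  set b := jwA n x (Function.update w y 1) w'
  have : star (star a * b) * (star a * b) = (star a * a) * (star b * b) := by
    rw [StarMul.star_mul, star_star]; ring
  rw [this, jwA_star_mul hnum1, jwA_star_mul hnum2, one_mul]

lemma hopC_row_unique {x y : Fin n} {w w' u : Fin n → Fin 2}
    (h1 : hopC x y w u) (h2 : hopC x y w' u) : w = w' := by
  funext j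
  by_cases hjx : j = x
  · subst hjx; rw [h1.1, h2.1]
  · by_cases hjy : j = y
    · subst hjy; rw [h1.2.1, h2.2.1]
    · rw [h1.2.2.2.2 j hjx hjy, h2.2.2.2.2 j hjx hjy]

lemma hopC_col_unique {x y : Fin n} {w u u' : Fin n → Fin 2}
    (h1 : hopC x y w u) (h2 : hopC x y w u') : u = u' := by
  funext j
  by_cases hjx : j = x
  · subst hjx; rw [h1.2.2.1, h2.2.2.1]
  · by_cases hjy : j = y
    · subst hjy; rw [h1.2.2.2.1, h2.2.2.2.1]
    · rw [← h1.2.2.2.2 j hjx hjy, h2.2.2.2.2 j hjx hjy]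

lemma hopC_row_eq {x y : Fin n} (hxy : x ≠ y) {w u : Fin n → Fin 2} (h : hopC x y w u) :
    w = Function.update (Function.update u x 1) y 0 := by
  funext j
  by_cases hjy : j = y
  · subst hjy; rw [Function.update_self, h.2.1]
  · rw [Function.update_of_ne hjy]
    by_cases hjx : j = x
    · subst hjx; rw [Function.update_self, h.1]
    · rw [Function.update_of_ne hjx]; exact h.2.2.2.2 j hjx hjy

lemma hopC_col_eq {x y : Fin n} (hxy : x ≠ y) {w u : Fin n → Fin 2} (h : hopC x y w u) :
    u = Function.update (Function.update w x 0) y 1 := by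
  funext j
  by_cases hjy : j = y
  · subst hjy; rw [Function.update_self, h.2.2.2.1]
  · rw [Function.update_of_ne hjy]
    by_cases hjx : j = x
    · subst hjx; rw [Function.update_self, h.2.2.1]
    · rw [Function.update_of_ne hjx]; exact (h.2.2.2.2 j hjx hjy).symm

lemma hopM_conjTranspose_mul {x y : Fin n} (hxy : x ≠ y) :
    (hopM n x y)ᴴ * hopM n x y =
      diagonal (fun u => if u x = 0 ∧ u y = 1 then (1 : ℂ) else 0) := by
  ext u u'
  rw [Matrix.mul_apply, diagonal_apply]
  simp only [conjTranspose_apply]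
  by_cases huu : u = u'
  · subst huu
    rw [if_pos rfl]
    by_cases hu : u x = 0 ∧ u y = 1
    · rw [if_pos hu]
      set w₀ := Function.update (Function.update u x 1) y 0 with hw₀
      have hhop : hopC x y w₀ u := by
        refine ⟨?_, ?_, hu.1, hu.2, ?_⟩
        · rw [hw₀, Function.update_of_ne hxy, Function.update_self]
        · rw [hw₀, Function.update_self]
        · intro j hjx hjy
          rw [hw₀, Function.update_of_ne hjy, Function.update_of_ne hjx]
      rw [Finset.sum_eq_single w₀]
      · exact hopM_star_mul hxy hhop
      · intro w _ hw
        rw [hopM_eq_zero hxy (fun hc => hw (hopC_row_eq hxy hc)), star_zero, zero_mul]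
      · simp
    · rw [if_neg hu]
      refine Finset.sum_eq_zero fun w _ => ?_
      rw [hopM_eq_zero hxy (fun hc => hu ⟨hc.2.2.1, hc.2.2.2.1⟩), star_zero, zero_mul]
  · rw [if_neg huu]
    refine Finset.sum_eq_zero fun w _ => ?_
    by_cases h1 : hopC x y w u
    · by_cases h2 : hopC x y w u'
      · exact absurd (hopC_col_unique h1 h2) huu
      · rw [hopM_eq_zero hxy h2, mul_zero]
    · rw [hopM_eq_zero hxy h1, star_zero, zero_mul]

lemma hopM_mul_diag_mul {x y : Fin n} (hxy : x ≠ y) (g : (Fin n → Fin 2) → ℂ) :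
    hopM n x y * diagonal g * (hopM n x y)ᴴ =
      diagonal (fun u => if u x = 1 ∧ u y = 0 then
        g (Function.update (Function.update u x 0) y 1) else 0) := by
  ext u u'
  rw [Matrix.mul_apply, diagonal_apply]
  simp only [conjTranspose_apply, Matrix.mul_diagonal]
  by_cases huu : u = u'
  · subst huu
    rw [if_pos rfl]
    by_cases hu : u x = 1 ∧ u y = 0
    · rw [if_pos hu]
      set w₀ := Function.update (Function.update u x 0) y 1 with hw₀
      have hhop : hopC x y u w₀ := by
        refine ⟨hu.1, hu.2, ?_, ?_, ?_⟩
        · rw [hw₀, Function.update_of_ne hxy, Function.update_self]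
        · rw [hw₀, Function.update_self]
        · intro j hjx hjy
          rw [hw₀, Function.update_of_ne hjy, Function.update_of_ne hjx]
      rw [Finset.sum_eq_single w₀]
      · rw [mul_comm (hopM n x y u w₀ * g w₀), ← mul_assoc]
        rw [hopM_star_mul hxy hhop, one_mul]
      · intro w _ hw
        rw [hopM_eq_zero hxy (fun hc => hw (hopC_col_eq hxy hc)), zero_mul, zero_mul]
      · simp
    · rw [if_neg hu]
      refine Finset.sum_eq_zero fun w _ => ?_
      rw [hopM_eq_zero hxy (fun hc => hu ⟨hc.1, hc.2.1⟩), zero_mul, zero_mul]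
  · rw [if_neg huu]
    refine Finset.sum_eq_zero fun w _ => ?_
    by_cases h1 : hopC x y u w
    · by_cases h2 : hopC x y u' w
      · exact absurd (hopC_row_unique h1 h2) huu
      · rw [hopM_eq_zero hxy h2, star_zero, mul_zero]
    · rw [hopM_eq_zero hxy h1, zero_mul, zero_mul]

lemma diagonal_comm_of_support (f : (Fin n → Fin 2) → ℂ) (A : FermionAlg n)
    (h : ∀ i j, A i j ≠ 0 → f i = f j) :
    diagonal f * A = A * diagonal f := by
  ext i j
  rw [Matrix.diagonal_mul, Matrix.mul_diagonal]
  by_cases hA : A i j = 0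
  · rw [hA, mul_zero, zero_mul]
  · rw [h i j hA, mul_comm]

lemma sum_split {M : Type*} [AddCommMonoid M] (g : Fin n → M) (x y : Fin n) (hxy : x ≠ y) :
    ∑ j, g j = g x + (g y + ∑ j ∈ (Finset.univ.erase x).erase y, g j) := by
  rw [← Finset.add_sum_erase _ g (Finset.mem_univ x)]
  congr 1
  rw [← Finset.add_sum_erase _ g (Finset.mem_erase.mpr ⟨Ne.symm hxy, Finset.mem_univ y⟩)]


/-- number of occupied (bit = 0) sites, as a complex scalar function. -/
def dN (v : Fin n → Fin 2) : ℂ := ∑ k, if v k = 0 then 1 else 0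

lemma sum_numOp : (∑ k, numOp n k) = diagonal (dN (n := n)) := by
  have : (∑ k, numOp n k) = ∑ k : Fin n, diagonal (fun w => if w k = 0 then (1 : ℂ) else 0) := by
    exact Finset.sum_congr rfl fun k _ => numOp_eq_diagonal k
  rw [this]
  ext v w
  rw [Matrix.sum_apply]
  by_cases h : v = w
  · subst h
    simp only [Matrix.diagonal_apply_eq]
    rfl
  · simp [Matrix.diagonal_apply_ne _ h]

lemma dN_hop {x y : Fin n} (hxy : x ≠ y) {w w' : Fin n → Fin 2} (h : hopC x y w w') :
    dN w = dN w' := by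
  obtain ⟨h1, h2, h3, h4, h5⟩ := h
  unfold dN
  rw [sum_split _ x y hxy, sum_split (fun k => if w' k = 0 then (1:ℂ) else 0) x y hxy]
  rw [h1, h2, h3, h4]
  have : ∑ j ∈ (Finset.univ.erase x).erase y, (if w j = 0 then (1:ℂ) else 0)
      = ∑ j ∈ (Finset.univ.erase x).erase y, (if w' j = 0 then (1:ℂ) else 0) := by
    refine Finset.sum_congr rfl fun j hj => ?_
    rw [Finset.mem_erase, Finset.mem_erase] at hj
    rw [h5 j hj.2.1 hj.1]
  rw [this]
  norm_num

lemma exp_smul_sum_numOp (z : ℂ) :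
    NormedSpace.exp (z • ∑ k, numOp n k) =
      diagonal (fun v => Complex.exp (z * dN v)) := by
  rw [sum_numOp, ← Matrix.diagonal_smul, Matrix.exp_diagonal]
  refine congrArg _ (funext fun v => ?_)
  rw [Pi.coe_exp, Pi.smul_apply, smul_eq_mul, ← Complex.exp_eq_exp_ℂ]

lemma expN_mul_expN (z : ℂ) :
    NormedSpace.exp (z • ∑ k, numOp n k) * NormedSpace.exp ((-z) • ∑ k, numOp n k) = 1 := by
  rw [exp_smul_sum_numOp, exp_smul_sum_numOp, diagonal_mul_diagonal]
  have : (fun v : Fin n → Fin 2 => Complex.exp (z * dN v) * Complex.exp (-z * dN v))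
      = fun _ => 1 := by
    funext v; rw [← Complex.exp_add]; ring_nf; exact Complex.exp_zero
  rw [this, diagonal_one]

lemma diag_comm_hopM {x y : Fin n} (hxy : x ≠ y) (f : (Fin n → Fin 2) → ℂ)
    (hf : ∀ w w', hopC x y w w' → f w = f w') :
    diagonal f * hopM n x y = hopM n x y * diagonal f := by
  refine diagonal_comm_of_support f _ fun i j hij => ?_
  by_cases h : hopC x y i j
  · exact hf i j h
  · exact absurd (hopM_eq_zero hxy h) hij

lemma diag_comm_hopMH {x y : Fin n} (hxy : x ≠ y) (f : (Fin n → Fin 2) → ℂ)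
    (hf : ∀ w w', hopC x y w w' → f w = f w') :
    diagonal f * (hopM n x y)ᴴ = (hopM n x y)ᴴ * diagonal f := by
  refine diagonal_comm_of_support f _ fun i j hij => ?_
  rw [conjTranspose_apply] at hij
  have : hopM n x y j i ≠ 0 := fun h => hij (by rw [h, star_zero])
  by_cases h : hopC x y j i
  · exact (hf j i h).symm
  · exact absurd (hopM_eq_zero hxy h) this

lemma conj_term (U V K Lh L A : FermionAlg n) (hUK : U*K = K*U) (hVK : V*K = K*V)
    (hULh : U*Lh = Lh*U) (hLV : L*V = V*L) :
    U * ((1/2 : ℂ) • (K*A + A*K) - Lh*A*L) * V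
      = (1/2 : ℂ) • (K*(U*A*V) + (U*A*V)*K) - Lh*(U*A*V)*L := by
  have h1 : U * (K * A) * V = K * (U * A * V) := by
    simp only [← mul_assoc]; rw [hUK]
  have h2 : U * (A * K) * V = (U * A * V) * K := by
    simp only [← mul_assoc]; rw [mul_assoc (U*A) K V, ← hVK, ← mul_assoc]
  have h3 : U * (Lh * A * L) * V = Lh * (U * A * V) * L := by
    simp only [← mul_assoc]; rw [hULh, mul_assoc (Lh*U*A) L V, hLV, ← mul_assoc]
  rw [mul_sub, sub_mul, mul_smul_comm, smul_mul_assoc, mul_add, add_mul, h1, h2, h3]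

lemma jumpOp_eq (Γ₀ r Z β : ℝ) (ε : Fin n → ℝ) (x y : Fin n) :
    jumpOp n Γ₀ r Z β ε x y
      = ((Real.sqrt (jumpRate n Γ₀ r Z β ε x y) : ℝ) : ℂ) • hopM n x y := rfl

lemma diag_comm_smul_hopM {x y : Fin n} (hxy : x ≠ y) (f : (Fin n → Fin 2) → ℂ)
    (hf : ∀ w w', hopC x y w w' → f w = f w') (c : ℂ) :
    diagonal f * (c • hopM n x y) = (c • hopM n x y) * diagonal f := by
  rw [mul_smul_comm, smul_mul_assoc, diag_comm_hopM hxy f hf]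

lemma diag_comm_smul_hopMH {x y : Fin n} (hxy : x ≠ y) (f : (Fin n → Fin 2) → ℂ)
    (hf : ∀ w w', hopC x y w w' → f w = f w') (c : ℂ) :
    diagonal f * (c • hopM n x y)ᴴ = (c • hopM n x y)ᴴ * diagonal f := by
  rw [conjTranspose_smul, mul_smul_comm, smul_mul_assoc, diag_comm_hopMH hxy f hf]

lemma part_i (n : ℕ) (β Γ₀ r Z : ℝ) (ε : Fin n → ℝ) (A : FermionAlg n) (t : ℝ) :
    NormedSpace.exp ((Complex.I * t) • (∑ k : Fin n, numOp n k)) *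
        Dkin n Γ₀ r Z β ε A *
        NormedSpace.exp ((-(Complex.I * t)) • (∑ k : Fin n, numOp n k))
      = Dkin n Γ₀ r Z β ε
          (NormedSpace.exp ((Complex.I * t) • (∑ k : Fin n, numOp n k)) * A *
            NormedSpace.exp ((-(Complex.I * t)) • (∑ k : Fin n, numOp n k))) := by
  set U := NormedSpace.exp ((Complex.I * t) • (∑ k : Fin n, numOp n k)) with hUdef
  set V := NormedSpace.exp ((-(Complex.I * t)) • (∑ k : Fin n, numOp n k)) with hVdef
  have hU : U = diagonal (fun v => Complex.exp ((Complex.I * t) * dN v)) :=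
    exp_smul_sum_numOp _
  have hV : V = diagonal (fun v => Complex.exp ((-(Complex.I * t)) * dN v)) :=
    exp_smul_sum_numOp _
  have hcomm : ∀ (x y : Fin n), x ≠ y → ∀ (c : ℂ),
      (U * (c • hopM n x y) = (c • hopM n x y) * U
        ∧ V * (c • hopM n x y) = (c • hopM n x y) * V)
      ∧ (U * (c • hopM n x y)ᴴ = (c • hopM n x y)ᴴ * U
        ∧ V * (c • hopM n x y)ᴴ = (c • hopM n x y)ᴴ * V) := by
    intro x y hxy c
    have hfU : ∀ w w', hopC x y w w' →
        Complex.exp ((Complex.I * t) * dN w) = Complex.exp ((Complex.I * t) * dN w') := by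
      intro w w' h; rw [dN_hop hxy h]
    have hfV : ∀ w w', hopC x y w w' →
        Complex.exp ((-(Complex.I * t)) * dN w)
          = Complex.exp ((-(Complex.I * t)) * dN w') := by
      intro w w' h; rw [dN_hop hxy h]
    exact ⟨⟨by rw [hU]; exact diag_comm_smul_hopM hxy _ hfU c,
            by rw [hV]; exact diag_comm_smul_hopM hxy _ hfV c⟩,
           ⟨by rw [hU]; exact diag_comm_smul_hopMH hxy _ hfU c,
            by rw [hV]; exact diag_comm_smul_hopMH hxy _ hfV c⟩⟩
  rw [Dkin, Dkin]
  simp only [Finset.mul_sum, Finset.sum_mul]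
  refine Finset.sum_congr rfl fun x _ => Finset.sum_congr rfl fun y _ => ?_
  by_cases hxy : x = y
  · simp [hxy]
  · rw [if_neg hxy, if_neg hxy]
    set L := jumpOp n Γ₀ r Z β ε x y with hL
    set c := ((Real.sqrt (jumpRate n Γ₀ r Z β ε x y) : ℝ) : ℂ)
    have hLM : L = c • hopM n x y := jumpOp_eq ..
    obtain ⟨⟨hUL, hVL⟩, ⟨hULh, hVLh⟩⟩ := hcomm x y hxy c
    rw [← hLM] at hUL hVL hULh hVLh
    have hUK : U * (Lᴴ * L) = (Lᴴ * L) * U := by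
      rw [← mul_assoc, hULh, mul_assoc, hUL, ← mul_assoc]
    have hVK : V * (Lᴴ * L) = (Lᴴ * L) * V := by
      rw [← mul_assoc, hVLh, mul_assoc, hVL, ← mul_assoc]
    have := conj_term U V (Lᴴ * L) Lᴴ L A hUK hVK hULh hVL.symm
    simpa only [mul_assoc] using this

/-- the (real) diagonal free-energy function. -/
def rF (ε : Fin n → ℝ) (μ : ℝ) (v : Fin n → Fin 2) : ℝ :=
  ∑ k, (ε k - μ) * (if v k = 0 then 1 else 0)

lemma freeEnergy_diag (ε : Fin n → ℝ) (μ : ℝ) :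
    freeEnergy n ε μ = diagonal (fun v => ((rF ε μ v : ℝ) : ℂ)) := by
  rw [freeEnergy]
  have : ∀ k : Fin n, ((ε k - μ : ℝ) : ℂ) • numOp n k
      = diagonal (fun v => ((ε k - μ : ℝ) : ℂ) * (if v k = 0 then 1 else 0)) := by
    intro k
    rw [numOp_eq_diagonal, ← Matrix.diagonal_smul]
    congr 1
  rw [Finset.sum_congr rfl fun k _ => this k]
  ext v w
  rw [Matrix.sum_apply]
  by_cases h : v = w
  · subst h
    simp only [Matrix.diagonal_apply_eq]
    rw [rF]
    push_cast [apply_ite (Complex.ofReal)]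
    rfl
  · simp [Matrix.diagonal_apply_ne _ h]

lemma expG_diag (ε : Fin n → ℝ) (μ β : ℝ) :
    NormedSpace.exp ((-(β : ℂ)) • freeEnergy n ε μ)
      = diagonal (fun v => ((Real.exp (-β * rF ε μ v) : ℝ) : ℂ)) := by
  rw [freeEnergy_diag, ← Matrix.diagonal_smul, Matrix.exp_diagonal]
  refine congrArg _ (funext fun v => ?_)
  rw [Pi.coe_exp, Pi.smul_apply, smul_eq_mul, ← Complex.exp_eq_exp_ℂ]
  rw [show (-(β:ℂ)) * ((rF ε μ v : ℝ) : ℂ) = ((-β * rF ε μ v : ℝ) : ℂ) by push_cast; ring]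
  rw [Complex.ofReal_exp]

lemma detailed_balance (Γ₀ r Z β : ℝ) (ε : Fin n → ℝ) (μ : ℝ) {x y : Fin n} (hxy : x ≠ y)
    {u : Fin n → Fin 2} (hux : u x = 0) (huy : u y = 1) :
    jumpRate n Γ₀ r Z β ε y x *
        Real.exp (-β * rF ε μ (Function.update (Function.update u y 0) x 1))
      = jumpRate n Γ₀ r Z β ε x y * Real.exp (-β * rF ε μ u) := by
  set u' := Function.update (Function.update u y 0) x 1 with hu'
  have hu'x : u' x = 1 := by rw [hu', Function.update_self]
  have hu'y : u' y = 0 := by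
    rw [hu', Function.update_of_ne (Ne.symm hxy), Function.update_self]
  have hu'off : ∀ j, j ≠ x → j ≠ y → u' j = u j := by
    intro j hjx hjy
    rw [hu', Function.update_of_ne hjx, Function.update_of_ne hjy]
  have hrFu : rF ε μ u = (ε x - μ) + ((0 : ℝ) +
      ∑ j ∈ (Finset.univ.erase x).erase y, (ε j - μ) * (if u j = 0 then 1 else 0)) := by
    rw [rF, sum_split _ x y hxy, hux, huy]
    norm_num
  have hrFu' : rF ε μ u' = (0 : ℝ) + ((ε y - μ) +
      ∑ j ∈ (Finset.univ.erase x).erase y, (ε j - μ) * (if u j = 0 then 1 else 0)) := by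
    rw [rF, sum_split _ x y hxy, hu'x, hu'y]
    norm_num
    refine Finset.sum_congr rfl fun j hj => ?_
    rw [Finset.mem_erase, Finset.mem_erase] at hj
    rw [hu'off j hj.2.1 hj.1]
  set R := ∑ j ∈ (Finset.univ.erase x).erase y, (ε j - μ) * (if u j = 0 then 1 else 0)
  rw [hrFu, hrFu']
  rw [jumpRate, jumpRate]
  have habs : |(y : ℤ) - (x : ℤ)| = |(x : ℤ) - (y : ℤ)| := abs_sub_comm _ _
  rw [habs]
  rw [mul_assoc, mul_assoc, mul_assoc, mul_assoc]
  congr 1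
  congr 1
  rw [← Real.exp_add, ← Real.exp_add]
  congr 1
  have hmax : max (ε x - ε y) 0 - max (-(ε x - ε y)) 0 = ε x - ε y :=
    max_zero_sub_max_neg_zero_eq_self _
  have h2 : max (ε y - ε x) 0 = max (-(ε x - ε y)) 0 := by rw [neg_sub]
  rw [h2] at *
  linear_combination (-β) * hmax

lemma jumpRate_nonneg {Γ₀ r Z β : ℝ} (hΓ₀ : 0 < Γ₀) (hZ : 0 < Z) (ε : Fin n → ℝ)
    (x y : Fin n) : 0 ≤ jumpRate n Γ₀ r Z β ε x y := by
  rw [jumpRate]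
  positivity

lemma B_term {Γ₀ r Z β : ℝ} (hΓ₀ : 0 < Γ₀) (hZ : 0 < Z) (ε : Fin n → ℝ) (μ : ℝ)
    {x y : Fin n} (hxy : x ≠ y) (e : (Fin n → Fin 2) → ℂ) :
    (1/2 : ℂ) • (diagonal e * ((jumpOp n Γ₀ r Z β ε x y)ᴴ * jumpOp n Γ₀ r Z β ε x y)
        + ((jumpOp n Γ₀ r Z β ε x y)ᴴ * jumpOp n Γ₀ r Z β ε x y) * diagonal e)
      - jumpOp n Γ₀ r Z β ε x y * diagonal e * (jumpOp n Γ₀ r Z β ε x y)ᴴ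
    = diagonal (fun u => ((jumpRate n Γ₀ r Z β ε x y : ℝ) : ℂ) *
        ((if u x = 0 ∧ u y = 1 then e u else 0)
          - (if u x = 1 ∧ u y = 0 then
              e (Function.update (Function.update u x 0) y 1) else 0))) := by
  set c := ((Real.sqrt (jumpRate n Γ₀ r Z β ε x y) : ℝ) : ℂ) with hc
  have hstar : star c = c := by rw [hc, Complex.star_def, Complex.conj_ofReal]
  have hcc : c * c = ((jumpRate n Γ₀ r Z β ε x y : ℝ) : ℂ) := by
    rw [hc, ← Complex.ofReal_mul, Real.mul_self_sqrt (jumpRate_nonneg hΓ₀ hZ ε x y)]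
  have hK : (jumpOp n Γ₀ r Z β ε x y)ᴴ * jumpOp n Γ₀ r Z β ε x y
      = ((jumpRate n Γ₀ r Z β ε x y : ℝ) : ℂ) •
          diagonal (fun u => if u x = 0 ∧ u y = 1 then (1 : ℂ) else 0) := by
    rw [jumpOp_eq, conjTranspose_smul, hstar, smul_mul_assoc, mul_smul_comm,
      hopM_conjTranspose_mul hxy, smul_smul, hcc]
  have hQ : jumpOp n Γ₀ r Z β ε x y * diagonal e * (jumpOp n Γ₀ r Z β ε x y)ᴴ
      = ((jumpRate n Γ₀ r Z β ε x y : ℝ) : ℂ) •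
          diagonal (fun u => if u x = 1 ∧ u y = 0 then
            e (Function.update (Function.update u x 0) y 1) else 0) := by
    rw [jumpOp_eq, conjTranspose_smul, hstar, smul_mul_assoc, smul_mul_assoc,
      mul_smul_comm, hopM_mul_diag_mul hxy, smul_smul, hcc]
  rw [hK, hQ]
  ext u u'
  by_cases h : u = u'
  · subst h
    simp only [Matrix.sub_apply, Matrix.smul_apply, Matrix.add_apply,
      Matrix.mul_diagonal, Matrix.diagonal_mul, Matrix.diagonal_apply_eq, smul_eq_mul]
    by_cases h1 : u x = 0 ∧ u y = 1 <;> by_cases h2 : u x = 1 ∧ u y = 0 <;>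
      simp [h1, h2] <;> ring
  · simp only [Matrix.sub_apply, Matrix.smul_apply, Matrix.add_apply,
      Matrix.mul_diagonal, Matrix.diagonal_mul, Matrix.diagonal_apply_ne _ h, smul_eq_mul]
    simp [Matrix.diagonal_apply_ne _ h]

lemma B_sum_zero {Γ₀ r Z β : ℝ} (hΓ₀ : 0 < Γ₀) (hZ : 0 < Z) (ε : Fin n → ℝ) (μ : ℝ) :
    (∑ x : Fin n, ∑ y : Fin n, if x = y then (0 : FermionAlg n) else
      ((1/2 : ℂ) • (diagonal (fun v => ((Real.exp (-β * rF ε μ v) : ℝ) : ℂ))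
            * ((jumpOp n Γ₀ r Z β ε x y)ᴴ * jumpOp n Γ₀ r Z β ε x y)
          + ((jumpOp n Γ₀ r Z β ε x y)ᴴ * jumpOp n Γ₀ r Z β ε x y)
            * diagonal (fun v => ((Real.exp (-β * rF ε μ v) : ℝ) : ℂ)))
        - jumpOp n Γ₀ r Z β ε x y * diagonal (fun v => ((Real.exp (-β * rF ε μ v) : ℝ) : ℂ))
            * (jumpOp n Γ₀ r Z β ε x y)ᴴ)) = 0 := by
  set e : (Fin n → Fin 2) → ℂ := fun v => ((Real.exp (-β * rF ε μ v) : ℝ) : ℂ) with he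
  have hterm : ∀ x y : Fin n, x ≠ y →
      ((1/2 : ℂ) • (diagonal e * ((jumpOp n Γ₀ r Z β ε x y)ᴴ * jumpOp n Γ₀ r Z β ε x y)
          + ((jumpOp n Γ₀ r Z β ε x y)ᴴ * jumpOp n Γ₀ r Z β ε x y) * diagonal e)
        - jumpOp n Γ₀ r Z β ε x y * diagonal e * (jumpOp n Γ₀ r Z β ε x y)ᴴ)
      = diagonal (fun u => ((jumpRate n Γ₀ r Z β ε x y : ℝ) : ℂ) *
          ((if u x = 0 ∧ u y = 1 then e u else 0)
            - (if u x = 1 ∧ u y = 0 then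
                e (Function.update (Function.update u x 0) y 1) else 0))) :=
    fun x y hxy => B_term hΓ₀ hZ ε μ hxy e
  have hsum : (∑ x : Fin n, ∑ y : Fin n, if x = y then (0 : FermionAlg n) else
      ((1/2 : ℂ) • (diagonal e * ((jumpOp n Γ₀ r Z β ε x y)ᴴ * jumpOp n Γ₀ r Z β ε x y)
          + ((jumpOp n Γ₀ r Z β ε x y)ᴴ * jumpOp n Γ₀ r Z β ε x y) * diagonal e)
        - jumpOp n Γ₀ r Z β ε x y * diagonal e * (jumpOp n Γ₀ r Z β ε x y)ᴴ))
      = ∑ x : Fin n, ∑ y : Fin n, if x = y then (0 : FermionAlg n) else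
          diagonal (fun u => ((jumpRate n Γ₀ r Z β ε x y : ℝ) : ℂ) *
            ((if u x = 0 ∧ u y = 1 then e u else 0)
              - (if u x = 1 ∧ u y = 0 then
                  e (Function.update (Function.update u x 0) y 1) else 0))) := by
    refine Finset.sum_congr rfl fun x _ => Finset.sum_congr rfl fun y _ => ?_
    by_cases hxy : x = y
    · rw [if_pos hxy, if_pos hxy]
    · rw [if_neg hxy, if_neg hxy, hterm x y hxy]
  rw [hsum]
  -- now a sum of (ite x=y 0 (diagonal ...)); show it is 0 entrywise
  ext u u'
  simp only [Matrix.sum_apply, Matrix.zero_apply]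
  by_cases h : u = u'
  · subst h
    have : ∀ x y : Fin n,
        (if x = y then (0 : FermionAlg n) else
          diagonal (fun u => ((jumpRate n Γ₀ r Z β ε x y : ℝ) : ℂ) *
            ((if u x = 0 ∧ u y = 1 then e u else 0)
              - (if u x = 1 ∧ u y = 0 then
                  e (Function.update (Function.update u x 0) y 1) else 0)))) u u
        = (if x = y then 0 else ((jumpRate n Γ₀ r Z β ε x y : ℝ) : ℂ) *
            ((if u x = 0 ∧ u y = 1 then e u else 0)
              - (if u x = 1 ∧ u y = 0 then
                  e (Function.update (Function.update u x 0) y 1) else 0))) := by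
      intro x y
      by_cases hxy : x = y
      · simp [hxy]
      · rw [if_neg hxy, if_neg hxy, Matrix.diagonal_apply_eq]
    rw [Finset.sum_congr rfl fun x _ => Finset.sum_congr rfl fun y _ => this x y]
    -- split into p-part and q-part
    have hsplit : ∀ x y : Fin n,
        (if x = y then (0:ℂ) else ((jumpRate n Γ₀ r Z β ε x y : ℝ) : ℂ) *
            ((if u x = 0 ∧ u y = 1 then e u else 0)
              - (if u x = 1 ∧ u y = 0 then
                  e (Function.update (Function.update u x 0) y 1) else 0)))
        = (if x = y then (0:ℂ) else ((jumpRate n Γ₀ r Z β ε x y : ℝ) : ℂ) *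
            (if u x = 0 ∧ u y = 1 then e u else 0))
          - (if x = y then (0:ℂ) else ((jumpRate n Γ₀ r Z β ε x y : ℝ) : ℂ) *
            (if u x = 1 ∧ u y = 0 then
                  e (Function.update (Function.update u x 0) y 1) else 0)) := by
      intro x y
      by_cases hxy : x = y
      · simp [hxy]
      · rw [if_neg hxy, if_neg hxy, if_neg hxy, mul_sub]
    rw [Finset.sum_congr rfl fun x _ => Finset.sum_congr rfl fun y _ => hsplit x y]
    simp only [Finset.sum_sub_distrib]
    rw [sub_eq_zero]
    rw [Finset.sum_comm]
    refine Finset.sum_congr rfl fun x _ => Finset.sum_congr rfl fun y _ => ?_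
    -- goal: ite (y = x) 0 (Γ y x * ite (u y = 1 ∧ u x = 0) (e (sw y x u)) 0)
    --     = ite (x = y) 0 (Γ x y * ite (u x = 0 ∧ u y = 1) (e u) 0)
    by_cases hxy : x = y
    · rw [if_pos hxy, if_pos hxy.symm]
    · rw [if_neg hxy, if_neg (Ne.symm hxy)]
      by_cases hu : u x = 1 ∧ u y = 0
      · rw [if_pos hu, if_pos (show u y = 0 ∧ u x = 1 from ⟨hu.2, hu.1⟩)]
        have := detailed_balance (n := n) Γ₀ r Z β ε μ (Ne.symm hxy) hu.2 hu.1
        simp only [he]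
        exact_mod_cast this.symm
      · have hu' : ¬ (u y = 0 ∧ u x = 1) := fun h => hu ⟨h.2, h.1⟩
        rw [if_neg hu, if_neg hu', mul_zero, mul_zero]
  · refine Finset.sum_eq_zero fun x _ => Finset.sum_eq_zero fun y _ => ?_
    by_cases hxy : x = y
    · simp [hxy]
    · rw [if_neg hxy, Matrix.diagonal_apply_ne _ h]

lemma trace_rearrange (G K Lh L A : FermionAlg n) :
    (G * ((1/2 : ℂ) • (K * A + A * K) - Lh * A * L)).trace
      = (((1/2 : ℂ) • (G * K + K * G) - L * G * Lh) * A).trace := by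
  have h1 : (G * (K * A)).trace = (G * K * A).trace := by rw [mul_assoc]
  have h2 : (G * (A * K)).trace = (K * G * A).trace := by
    rw [← mul_assoc, Matrix.trace_mul_comm, ← mul_assoc]
  have h3 : (G * (Lh * A * L)).trace = (L * G * Lh * A).trace := by
    rw [← mul_assoc, Matrix.trace_mul_comm]
    simp only [← mul_assoc]
  rw [mul_sub, sub_mul, Matrix.trace_sub, Matrix.trace_sub, mul_smul_comm,
    smul_mul_assoc, Matrix.trace_smul, Matrix.trace_smul, mul_add, add_mul,
    Matrix.trace_add, Matrix.trace_add, h1, h2, h3]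

lemma part_ii {β Γ₀ r Z : ℝ} (hΓ₀ : 0 < Γ₀) (hZ : 0 < Z) (ε : Fin n → ℝ) (μ' : ℝ)
    (A : FermionAlg n) : gibbs n ε μ' β (Dkin n Γ₀ r Z β ε A) = 0 := by
  rw [gibbs]
  suffices h : ((NormedSpace.exp ((-(β : ℂ)) • freeEnergy n ε μ')) *
      Dkin n Γ₀ r Z β ε A).trace = 0 by rw [h, zero_div]
  set e : (Fin n → Fin 2) → ℂ := fun v => ((Real.exp (-β * rF ε μ' v) : ℝ) : ℂ) with he
  rw [expG_diag, Dkin]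
  rw [Finset.mul_sum]
  simp only [Finset.mul_sum]
  rw [Matrix.trace_sum]
  simp only [Matrix.trace_sum]
  have hterm : ∀ x y : Fin n,
      (diagonal e * (if x = y then (0 : FermionAlg n) else
        ((1 / 2 : ℂ) • ((jumpOp n Γ₀ r Z β ε x y)ᴴ * jumpOp n Γ₀ r Z β ε x y * A
            + A * ((jumpOp n Γ₀ r Z β ε x y)ᴴ * jumpOp n Γ₀ r Z β ε x y))
          - (jumpOp n Γ₀ r Z β ε x y)ᴴ * A * jumpOp n Γ₀ r Z β ε x y))).trace
      = ((if x = y then (0 : FermionAlg n) else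
          ((1/2 : ℂ) • (diagonal e * ((jumpOp n Γ₀ r Z β ε x y)ᴴ * jumpOp n Γ₀ r Z β ε x y)
              + ((jumpOp n Γ₀ r Z β ε x y)ᴴ * jumpOp n Γ₀ r Z β ε x y) * diagonal e)
            - jumpOp n Γ₀ r Z β ε x y * diagonal e * (jumpOp n Γ₀ r Z β ε x y)ᴴ)) * A).trace := by
    intro x y
    by_cases hxy : x = y
    · simp [hxy]
    · rw [if_neg hxy, if_neg hxy]
      exact trace_rearrange (diagonal e)
        ((jumpOp n Γ₀ r Z β ε x y)ᴴ * jumpOp n Γ₀ r Z β ε x y)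
        ((jumpOp n Γ₀ r Z β ε x y)ᴴ) (jumpOp n Γ₀ r Z β ε x y) A
  rw [Finset.sum_congr rfl fun x _ => Finset.sum_congr rfl fun y _ => hterm x y]
  simp only [← Matrix.trace_sum, ← Finset.sum_mul]
  rw [B_sum_zero hΓ₀ hZ ε μ', zero_mul, Matrix.trace_zero]

lemma fin2_cases (a : Fin 2) : a = 0 ∨ a = 1 := by revert a; decide

lemma rF_update (ε : Fin n → ℝ) (μ : ℝ) (k₀ : Fin n) (v : Fin n → Fin 2) (hv : v k₀ = 0) :
    rF ε μ (Function.update v k₀ 1) = rF ε μ v - (ε k₀ - μ) := by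
  rw [rF, rF, ← Finset.add_sum_erase _ _ (Finset.mem_univ k₀),
    ← Finset.add_sum_erase _ _ (Finset.mem_univ k₀)]
  rw [Function.update_self, hv]
  have : ∑ j ∈ Finset.univ.erase k₀,
      (ε j - μ) * (if Function.update v k₀ 1 j = 0 then (1:ℝ) else 0)
      = ∑ j ∈ Finset.univ.erase k₀, (ε j - μ) * (if v j = 0 then (1:ℝ) else 0) := by
    refine Finset.sum_congr rfl fun j hj => ?_
    rw [Function.update_of_ne (Finset.mem_erase.mp hj).1]
  rw [this]
  norm_num

lemma gibbs_numOp (hn : 1 ≤ n) (β : ℝ) (ε : Fin n → ℝ) (μ : ℝ) :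
    gibbs n ε μ β (numOp n ⟨0, hn⟩)
      = 1 / (1 + ((Real.exp (β * (ε ⟨0, hn⟩ - μ)) : ℝ) : ℂ)) := by
  set k₀ : Fin n := ⟨0, hn⟩
  set c : ℂ := ((Real.exp (β * (ε k₀ - μ)) : ℝ) : ℂ) with hc
  set er : (Fin n → Fin 2) → ℝ := fun v => Real.exp (-β * rF ε μ v) with her
  rw [gibbs, expG_diag, numOp_eq_diagonal, diagonal_mul_diagonal,
    Matrix.trace_diagonal, Matrix.trace_diagonal]
  simp only [mul_ite, mul_one, mul_zero]
  -- numerator is T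
  set Treal : ℝ := ∑ v : Fin n → Fin 2, (if v k₀ = 0 then er v else 0) with hTreal
  have hnum : (∑ v : Fin n → Fin 2, if v k₀ = 0 then ((er v : ℝ) : ℂ) else 0)
      = ((Treal : ℝ) : ℂ) := by
    rw [hTreal]
    push_cast [apply_ite (Complex.ofReal)]
    rfl
  -- denominator
  have hflip : ∀ v : Fin n → Fin 2, v k₀ = 0 →
      ((er (Function.update v k₀ 1) : ℝ) : ℂ) = ((er v : ℝ) : ℂ) * c := by
    intro v hv
    rw [her, hc]
    simp only []
    rw [rF_update ε μ k₀ v hv, ← Complex.ofReal_mul, ← Real.exp_add]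
    congr 1
    ring
  have hdenom : (∑ v : Fin n → Fin 2, ((er v : ℝ) : ℂ)) = ((Treal : ℝ) : ℂ) * (1 + c) := by
    have hdec : ∀ v : Fin n → Fin 2, ((er v : ℝ) : ℂ)
        = (if v k₀ = 0 then ((er v : ℝ) : ℂ) else 0)
          + (if v k₀ = 1 then ((er v : ℝ) : ℂ) else 0) := by
      intro v
      rcases fin2_cases (v k₀) with h | h <;> simp [h]
    rw [Finset.sum_congr rfl fun v _ => hdec v, Finset.sum_add_distrib]
    -- second sum via flip bijection
    set flip : (Fin n → Fin 2) → (Fin n → Fin 2) :=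
      fun v j => if j = k₀ then (if v k₀ = 0 then 1 else 0) else v j with hflipdef
    have hfk : ∀ v, flip v k₀ = if v k₀ = 0 then 1 else 0 := by
      intro v; simp [hflipdef]
    have hfoff : ∀ v j, j ≠ k₀ → flip v j = v j := by
      intro v j hj; simp [hflipdef, hj]
    have hinv : Function.Involutive flip := by
      intro v
      funext j
      by_cases hj : j = k₀
      · rw [hj, hfk, hfk]
        rcases fin2_cases (v k₀) with h | h <;> rw [h] <;> decide
      · rw [hfoff _ j hj, hfoff _ j hj]
    have hsum2 : (∑ v : Fin n → Fin 2, if v k₀ = 1 then ((er v : ℝ) : ℂ) else 0)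
        = ∑ v : Fin n → Fin 2, (if v k₀ = 0 then ((er v : ℝ) : ℂ) * c else 0) := by
      rw [← Function.Bijective.sum_comp hinv.bijective
        (fun v => if v k₀ = 1 then ((er v : ℝ) : ℂ) else 0)]
      refine Finset.sum_congr rfl fun v _ => ?_
      show (if flip v k₀ = 1 then ((er (flip v) : ℝ) : ℂ) else 0) = _
      rcases fin2_cases (v k₀) with h | h
      · rw [hfk, if_pos h, if_pos rfl, if_pos h]
        have hfv : flip v = Function.update v k₀ 1 := by
          funext j
          by_cases hj : j = k₀
          · subst hj; rw [hfk, if_pos h, Function.update_self]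
          · rw [hfoff _ j hj, Function.update_of_ne hj]
        rw [hfv, hflip v h]
      · simp [hfk, h]
    rw [hsum2]
    have : (∑ v : Fin n → Fin 2, if v k₀ = 0 then ((er v : ℝ) : ℂ) * c else 0)
        = (∑ v : Fin n → Fin 2, if v k₀ = 0 then ((er v : ℝ) : ℂ) else 0) * c := by
      rw [Finset.sum_mul]
      refine Finset.sum_congr rfl fun v _ => ?_
      split <;> simp
    rw [this, hnum, mul_one_add]
  rw [hnum, hdenom]
  have hT : Treal ≠ 0 := by
    have hpos : 0 < Treal := by
      rw [hTreal]
      refine Finset.sum_pos' (fun v _ => ?_) ⟨(fun _ => (0 : Fin 2)), Finset.mem_univ _, ?_⟩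
      · split
        · exact le_of_lt (Real.exp_pos _)
        · exact le_refl 0
      · rw [if_pos rfl]
        exact Real.exp_pos _
    exact ne_of_gt hpos
  have h1c : (1 + c) ≠ 0 := by
    have hcast : (1 + c) = ((1 + Real.exp (β * (ε k₀ - μ)) : ℝ) : ℂ) := by
      rw [hc]; push_cast; ring
    rw [hcast, Ne, Complex.ofReal_eq_zero]
    nlinarith [Real.exp_pos (β * (ε k₀ - μ))]
  have hT' : ((Treal : ℝ) : ℂ) ≠ 0 := by exact_mod_cast hT
  rw [div_eq_div_iff (mul_ne_zero hT' h1c) h1c]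
  ring

lemma part_iii (hn : 1 ≤ n) {β : ℝ} (hβ : 0 < β) (ε : Fin n → ℝ) :
    ∀ μ₁ μ₂ : ℝ, μ₁ ≠ μ₂ → gibbs n ε μ₁ β ≠ gibbs n ε μ₂ β := by
  intro μ₁ μ₂ hμ hfun
  have h1 := gibbs_numOp hn β ε μ₁
  have h2 := gibbs_numOp hn β ε μ₂
  rw [hfun, h2, one_div, one_div] at h1
  have h3 := inv_injective h1
  have h4 : ((Real.exp (β * (ε ⟨0, hn⟩ - μ₂)) : ℝ) : ℂ)
      = ((Real.exp (β * (ε ⟨0, hn⟩ - μ₁)) : ℝ) : ℂ) := by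
    have := add_left_cancel h3
    exact this.symm ▸ rfl
  rw [Complex.ofReal_inj] at h4
  have h5 := Real.exp_injective h4
  have h6 := mul_left_cancel₀ (ne_of_gt hβ) h5
  apply hμ
  linarith

end AuxJW

/-- The kinetic dissipation operator does not have a unique invariant
state: (i) with `N = Σ_k n_k`, `D_kin` commutes with the number dynamics; (ii) for every
`μ′`, the Gibbs state `ρ_{μ′}` built from `F_{μ′} = Σ_k (ε_k − μ′) n_k` is `D_kin`-invariant;
(iii) distinct values of `μ′` give distinct such `D_kin`-invariant states (the map
`μ′ ↦ 1/(1+e^{β(ε_0−μ′)})` being non-constant, since `β > 0`). -/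
theorem kinetic_dissipator_no_unique_invariant_state
    (n : ℕ) (hn : 1 ≤ n) (β Γ₀ r Z : ℝ) (hβ : 0 < β) (hΓ₀ : 0 < Γ₀) (hr : 0 < r)
    (hZ : 0 < Z) (ε : Fin n → ℝ) :
    (∀ A : FermionAlg n, ∀ t : ℝ,
      NormedSpace.exp ((Complex.I * t) • (∑ k : Fin n, numOp n k)) *
          Dkin n Γ₀ r Z β ε A *
          NormedSpace.exp ((-(Complex.I * t)) • (∑ k : Fin n, numOp n k))
      = Dkin n Γ₀ r Z β ε
          (NormedSpace.exp ((Complex.I * t) • (∑ k : Fin n, numOp n k)) * A *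
            NormedSpace.exp ((-(Complex.I * t)) • (∑ k : Fin n, numOp n k)))) ∧
    (∀ μ' : ℝ, ∀ A : FermionAlg n, gibbs n ε μ' β (Dkin n Γ₀ r Z β ε A) = 0) ∧
    (∀ μ₁ μ₂ : ℝ, μ₁ ≠ μ₂ → gibbs n ε μ₁ β ≠ gibbs n ε μ₂ β) := by
  exact ⟨fun A t => part_i n β Γ₀ r Z ε A t,
    fun μ' A => part_ii hΓ₀ hZ ε μ' A,
    part_iii hn hβ ε⟩

end
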